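/- arXiv:1709.04276 — 2 statements merged into one kernel-verified Lean document; each statement's English description precedes it below -/
import Mathlib

section
/- Let 1 ≤ p ≤ ∞ and α ≥ 0. There exists a constant C > 0 such that for every measurable u : ℂ → ℂ with ‖⟨z⟩^α u‖_{L^p(ℂ)} < ∞ (where ⟨z⟩ = (1+|z|²)^{1/2}), the integral Πu(z) = (1/π) e^{−|z|²/2} ∫_ℂ e^{\overline{w} z − |w|²/2} u(w) dL(w) converges absolutely for every z ∈ ℂ, and ‖⟨z⟩^α Πu‖_{L^p(ℂ)} ≤ C ‖⟨z⟩^α u‖_{L^p(ℂ)}. -/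
open MeasureTheory

section LLLhelpers

open Real Set

lemma LLL_integrable_abs_rpow_mul_exp_neg_mul_sq {b : ℝ} (hb : 0 < b) {s : ℝ} (hs : -1 < s) :
    Integrable fun x : ℝ => |x| ^ s * Real.exp (-b * x ^ 2) := by
  have hIoi : IntegrableOn (fun x : ℝ => |x| ^ s * Real.exp (-b * x ^ 2)) (Ioi 0) := by
    refine (integrableOn_rpow_mul_exp_neg_mul_sq hb hs).congr_fun
      (fun x hx => ?_) measurableSet_Ioi
    rw [abs_of_pos (mem_Ioi.mp hx)]
  rw [← integrableOn_univ, ← @Iio_union_Ici _ _ (0 : ℝ), integrableOn_union,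
    integrableOn_Ici_iff_integrableOn_Ioi]
  refine ⟨?_, hIoi⟩
  rw [← (Measure.measurePreserving_neg (volume : Measure ℝ)).integrableOn_comp_preimage
      (Homeomorph.neg ℝ).measurableEmbedding]
  simp only [Function.comp_def, abs_neg, neg_sq, neg_preimage, neg_Iio, neg_zero]
  exact hIoi

lemma LLL_psi_integrable {b β : ℝ} (hb : 0 < b) (hβ : 0 ≤ β) :
    Integrable (fun t : ℝ => (1 + t ^ 2) ^ β * Real.exp (-b * t ^ 2)) := by
  have hcont : Continuous fun t : ℝ => (1 + t ^ 2) ^ β * Real.exp (-b * t ^ 2) := by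
    apply Continuous.mul
    · exact (continuous_const.add (continuous_pow 2)).rpow_const
        (fun x => Or.inr hβ)
    · exact Real.continuous_exp.comp (by continuity)
  have h1 : Integrable (fun t : ℝ => 2 ^ β * Real.exp (-b * t ^ 2)
      + 2 ^ β * (|t| ^ (2 * β) * Real.exp (-b * t ^ 2))) :=
    ((integrable_exp_neg_mul_sq hb).const_mul _).add
      ((LLL_integrable_abs_rpow_mul_exp_neg_mul_sq hb (by linarith : (-1:ℝ) < 2*β)).const_mul _)
  refine h1.mono' hcont.aestronglyMeasurable (Filter.Eventually.of_forall fun t => ?_)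
  have he : 0 < Real.exp (-b * t ^ 2) := Real.exp_pos _
  have h2 : (1 + t ^ 2) ^ β ≤ 2 ^ β + 2 ^ β * |t| ^ (2 * β) := by
    rcases le_total (t ^ 2) 1 with h | h
    · have h6 : (1 + t ^ 2 : ℝ) ^ β ≤ (2 : ℝ) ^ β :=
        Real.rpow_le_rpow (by positivity) (by linarith) hβ
      have h7 : (0:ℝ) ≤ 2 ^ β * |t| ^ (2*β) := by positivity
      linarith
    · have h3 : (1 + t ^ 2 : ℝ) ^ β ≤ (2 * t ^ 2) ^ β :=
        Real.rpow_le_rpow (by positivity) (by linarith) hβ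
      have h4 : ((2:ℝ) * t ^ 2) ^ β = 2 ^ β * (t ^ 2) ^ β :=
        Real.mul_rpow (by norm_num) (by positivity)
      have h5 : ((t:ℝ) ^ 2) ^ β = |t| ^ (2 * β) := by
        rw [← sq_abs, ← Real.rpow_natCast |t| 2, ← Real.rpow_mul (abs_nonneg t)]
        norm_num [mul_comm]
      have h8 : (0:ℝ) < 2 ^ β := by positivity
      nlinarith
  have hnorm : ‖(1 + t ^ 2) ^ β * Real.exp (-b * t ^ 2)‖
      = (1 + t ^ 2) ^ β * Real.exp (-b * t ^ 2) := by
    rw [Real.norm_eq_abs, abs_of_nonneg (by positivity)]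
  rw [hnorm]
  nlinarith [mul_le_mul_of_nonneg_right h2 he.le]

lemma LLL_gauss2d_integrable {b β : ℝ} (hb : 0 < b) (hβ : 0 ≤ β) :
    Integrable (fun w : ℂ => (1 + ‖w‖ ^ 2) ^ β * Real.exp (-b * ‖w‖ ^ 2)) := by
  have hψ := LLL_psi_integrable hb hβ
  have hprod : Integrable (fun q : ℝ × ℝ =>
      ((1 + q.1 ^ 2) ^ β * Real.exp (-b * q.1 ^ 2)) *
      ((1 + q.2 ^ 2) ^ β * Real.exp (-b * q.2 ^ 2)))
      ((volume : Measure ℝ).prod volume) := Integrable.mul_prod hψ hψ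
  have hmap : Integrable (fun w : ℂ =>
      ((1 + w.re ^ 2) ^ β * Real.exp (-b * w.re ^ 2)) *
      ((1 + w.im ^ 2) ^ β * Real.exp (-b * w.im ^ 2))) (volume : Measure ℂ) := by
    have h := (MeasurePreserving.integrable_comp_emb
      Complex.volume_preserving_equiv_real_prod
      Complex.measurableEquivRealProd.measurableEmbedding).mpr hprod
    simpa [Function.comp_def, Complex.measurableEquivRealProd_apply] using h
  have hcont : Continuous fun w : ℂ => (1 + ‖w‖ ^ 2) ^ β * Real.exp (-b * ‖w‖ ^ 2) := by
    apply Continuous.mul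
    · exact (continuous_const.add ((continuous_norm).pow 2)).rpow_const
        (fun x => Or.inr hβ)
    · exact Real.continuous_exp.comp (by continuity)
  refine hmap.mono' hcont.aestronglyMeasurable (Filter.Eventually.of_forall fun w => ?_)
  have hsq : ‖w‖ ^ 2 = w.re ^ 2 + w.im ^ 2 := by
    simp only [Complex.sq_norm, Complex.normSq_apply]; ring
  have h1 : (1 + ‖w‖ ^ 2 : ℝ) ^ β ≤ (1 + w.re ^ 2) ^ β * (1 + w.im ^ 2) ^ β := by
    rw [← Real.mul_rpow (by positivity) (by positivity)]
    apply Real.rpow_le_rpow (by positivity) _ hβ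
    rw [hsq]; nlinarith [sq_nonneg w.re, sq_nonneg w.im, sq_nonneg (w.re * w.im)]
  have h2 : Real.exp (-b * ‖w‖ ^ 2) = Real.exp (-b * w.re ^ 2) * Real.exp (-b * w.im ^ 2) := by
    rw [← Real.exp_add, hsq]; ring_nf
  rw [Real.norm_eq_abs, abs_of_nonneg (by positivity), h2]
  calc (1 + ‖w‖ ^ 2 : ℝ) ^ β * (Real.exp (-b * w.re ^ 2) * Real.exp (-b * w.im ^ 2))
      ≤ ((1 + w.re ^ 2) ^ β * (1 + w.im ^ 2) ^ β) *
        (Real.exp (-b * w.re ^ 2) * Real.exp (-b * w.im ^ 2)) := by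
        apply mul_le_mul_of_nonneg_right h1 (by positivity)
    _ = ((1 + w.re ^ 2) ^ β * Real.exp (-b * w.re ^ 2)) *
        ((1 + w.im ^ 2) ^ β * Real.exp (-b * w.im ^ 2)) := by ring

lemma LLL_gauss_integrable {b : ℝ} (hb : 0 < b) :
    Integrable (fun w : ℂ => Real.exp (-b * ‖w‖ ^ 2)) := by
  have := LLL_gauss2d_integrable hb le_rfl (β := 0)
  simpa using this

lemma LLL_gauss_memLp {b K : ℝ} (hb : 0 < b) (q : ENNReal) {g : ℂ → ℂ}
    (hm : AEStronglyMeasurable g (volume : Measure ℂ))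
    (hbd : ∀ w, ‖g w‖ ≤ K * Real.exp (-b * ‖w‖ ^ 2)) :
    MemLp g q (volume : Measure ℂ) := by
  rcases eq_or_ne q 0 with rfl | hq0
  · simpa [memLp_zero_iff_aestronglyMeasurable] using hm
  rcases eq_or_ne q ⊤ with rfl | hqt
  · refine memLp_top_of_bound hm |K| (Filter.Eventually.of_forall fun w => ?_)
    have h1 : Real.exp (-b * ‖w‖ ^ 2) ≤ 1 := by
      rw [Real.exp_le_one_iff]; nlinarith [sq_nonneg ‖w‖]
    have h2 := hbd w
    have h3 : K * Real.exp (-b * ‖w‖ ^ 2) ≤ |K| * 1 := by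
      calc K * Real.exp (-b * ‖w‖ ^ 2) ≤ |K| * Real.exp (-b * ‖w‖ ^ 2) := by
            apply mul_le_mul_of_nonneg_right (le_abs_self K) (Real.exp_pos _).le
        _ ≤ |K| * 1 := by apply mul_le_mul_of_nonneg_left h1 (abs_nonneg K)
    calc ‖g w‖ ≤ K * Real.exp (-b * ‖w‖ ^ 2) := h2
      _ ≤ |K| * 1 := h3
      _ = |K| := mul_one _
  constructor
  · exact hm
  rw [eLpNorm_eq_lintegral_rpow_enorm_toReal hq0 hqt]
  refine ENNReal.rpow_lt_top_of_nonneg (by positivity) (ne_of_lt ?_)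
  set r := q.toReal with hr
  have hr0 : 0 < r := ENNReal.toReal_pos hq0 hqt
  have hK : ∀ w : ℂ, (‖g w‖₊ : ENNReal) ^ r ≤
      ENNReal.ofReal ((|K| + 1) ^ r * Real.exp (-(r * b) * ‖w‖ ^ 2)) := by
    intro w
    have h1 : ‖g w‖ ≤ (|K| + 1) * Real.exp (-b * ‖w‖ ^ 2) := by
      refine (hbd w).trans ?_
      apply mul_le_mul_of_nonneg_right _ (Real.exp_pos _).le
      linarith [le_abs_self K]
    have h2 : ‖g w‖ ^ r ≤ ((|K| + 1) * Real.exp (-b * ‖w‖ ^ 2)) ^ r :=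
      Real.rpow_le_rpow (norm_nonneg _) h1 hr0.le
    have h3 : ((|K| + 1) * Real.exp (-b * ‖w‖ ^ 2)) ^ r
        = (|K| + 1) ^ r * Real.exp (-(r * b) * ‖w‖ ^ 2) := by
      rw [Real.mul_rpow (by positivity) (Real.exp_pos _).le, ← Real.exp_mul]
      ring_nf
    calc (‖g w‖₊ : ENNReal) ^ r = ENNReal.ofReal (‖g w‖ ^ r) := by
          rw [← enorm_eq_nnnorm, ← ofReal_norm, ← ENNReal.ofReal_rpow_of_nonneg (norm_nonneg _) hr0.le]
      _ ≤ _ := by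
          apply ENNReal.ofReal_le_ofReal; rw [← h3]; exact h2
  calc ∫⁻ w, (‖g w‖₊ : ENNReal) ^ r ∂(volume : Measure ℂ)
      ≤ ∫⁻ w, ENNReal.ofReal ((|K| + 1) ^ r * Real.exp (-(r * b) * ‖w‖ ^ 2)) ∂volume :=
        lintegral_mono hK
    _ ≤ ∫⁻ w, ‖(|K| + 1) ^ r * Real.exp (-(r * b) * ‖w‖ ^ 2)‖₊ ∂volume :=
        lintegral_mono fun w => Real.ofReal_le_enorm _
    _ < ⊤ := (((LLL_gauss_integrable (by positivity : 0 < r * b))).const_mul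
        ((|K| + 1) ^ r)).hasFiniteIntegral

lemma LLL_conv_lintegral_inner (M : ℂ → ENNReal) (hM : Measurable M) (z : ℂ) :
    (∫⁻ w, M (z - w) ∂(volume : Measure ℂ)) = ∫⁻ x, M x ∂volume :=
  (Measure.measurePreserving_sub_left (volume : Measure ℂ) z).lintegral_comp hM

lemma LLL_swap_lemma (M : ℂ → ENNReal) (hM : Measurable M) (F : ℂ → ENNReal)
    (hF : AEMeasurable F (volume : Measure ℂ)) :
    ∫⁻ z, (∫⁻ w, M (z - w) * F w ∂volume) ∂(volume : Measure ℂ)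
      = (∫⁻ x, M x ∂volume) * ∫⁻ w, F w ∂volume := by
  obtain ⟨F', hF'm, hFF'⟩ := hF
  have hinner : ∀ z : ℂ, (∫⁻ w, M (z - w) * F w ∂volume)
      = ∫⁻ w, M (z - w) * F' w ∂volume := fun z =>
    lintegral_congr_ae (hFF'.mono fun w hw => by simp only [hw])
  have houter : (∫⁻ w, F w ∂volume) = ∫⁻ w, F' w ∂volume := lintegral_congr_ae hFF'
  simp only [hinner, houter]
  rw [lintegral_lintegral_swap]
  · have h2 : ∀ w : ℂ, (∫⁻ z, M (z - w) * F' w ∂volume)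
        = (∫⁻ x, M x ∂volume) * F' w := fun w => by
      rw [lintegral_mul_const (F' w) (by fun_prop : Measurable fun z : ℂ => M (z - w)),
        lintegral_sub_right_eq_self M w]
    simp only [h2]
    rw [lintegral_const_mul _ hF'm]
  · exact ((hM.comp (measurable_fst.sub measurable_snd)).mul
      (hF'm.comp measurable_snd)).aemeasurable

lemma LLL_schur_bound (M : ℂ → ENNReal) (hM : Measurable M) (hM0 : ∀ x, M x ≠ 0)
    (hMt : ∀ x, M x ≠ ⊤) (hA0 : (∫⁻ x, M x ∂(volume : Measure ℂ)) ≠ 0)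
    (hAt : (∫⁻ x, M x ∂(volume : Measure ℂ)) ≠ ⊤)
    (p : ENNReal) (hp : 1 ≤ p) (v g : ℂ → ℂ)
    (hv : AEStronglyMeasurable v (volume : Measure ℂ))
    (hg : ∀ z, (‖g z‖₊ : ENNReal) ≤ ∫⁻ w, M (z - w) * (‖v w‖₊ : ENNReal) ∂volume) :
    eLpNorm g p volume ≤ (∫⁻ x, M x ∂volume) * eLpNorm v p volume := by
  set A := ∫⁻ x, M x ∂(volume : Measure ℂ) with hA
  set F : ℂ → ENNReal := fun w => (‖v w‖₊ : ENNReal) with hFdef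
  have hFm : AEMeasurable F volume := hv.enorm
  have hp0 : p ≠ 0 := fun h => by simp [h] at hp
  rcases eq_or_ne p ⊤ with rfl | hpt
  · set B := eLpNormEssSup v volume with hB
    have hTz : ∀ z : ℂ, (∫⁻ w, M (z - w) * F w ∂volume) ≤ A * B := by
      intro z
      calc (∫⁻ w, M (z - w) * F w ∂volume)
          ≤ ∫⁻ w, M (z - w) * B ∂volume := by
            refine lintegral_mono_ae
              ((ae_le_eLpNormEssSup (f := v) (μ := (volume : Measure ℂ))).mono fun w hw => ?_)
            exact mul_le_mul_right hw _
        _ = (∫⁻ w, M (z - w) ∂volume) * B :=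
            lintegral_mul_const B (by fun_prop)
        _ = A * B := by rw [LLL_conv_lintegral_inner M hM z]
    rw [eLpNorm_exponent_top]
    exact essSup_le_of_ae_le _ (Filter.Eventually.of_forall fun z => (hg z).trans (hTz z))
  rcases eq_or_ne p 1 with rfl | hp1
  · rw [eLpNorm_one_eq_lintegral_enorm, eLpNorm_one_eq_lintegral_enorm]
    calc (∫⁻ z, (‖g z‖₊ : ENNReal) ∂volume)
        ≤ ∫⁻ z, (∫⁻ w, M (z - w) * F w ∂volume) ∂volume := lintegral_mono hg
      _ = A * ∫⁻ w, F w ∂volume := LLL_swap_lemma M hM F hFm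
  · set r := p.toReal with hrdef
    have hr1 : 1 < r := by
      have := ENNReal.toReal_lt_toReal (by simp) hpt |>.mpr (lt_of_le_of_ne hp (Ne.symm hp1))
      simpa using this
    have hr0 : 0 < r := lt_trans one_pos hr1
    set s := r.conjExponent with hsdef
    have hcs : s.HolderConjugate r := (Real.HolderConjugate.conjExponent hr1).symm
    have hs0 : 0 < s := hcs.pos
    have h1sr : 1 / s + 1 / r = 1 := by
      have := hcs.inv_add_inv_eq_one
      rw [one_div, one_div]
      linarith
    set S : ℂ → ENNReal := fun z => ∫⁻ w, M (z - w) * F w ^ r ∂volume with hSdef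
    have hFr : AEMeasurable (fun w => F w ^ r) volume := by fun_prop
    have holder : ∀ z : ℂ, (∫⁻ w, M (z - w) * F w ∂volume) ≤ A ^ (1/s) * S z ^ (1/r) := by
      intro z
      have hsplit : (fun w => M (z - w) * F w)
          = fun w => (M (z - w) ^ (1/s)) * ((M (z - w) ^ (1/r)) * F w) := by
        funext w
        rw [← mul_assoc, ← ENNReal.rpow_add _ _ (hM0 _) (hMt _), h1sr, ENNReal.rpow_one]
      rw [hsplit]
      have hHo := ENNReal.lintegral_mul_le_Lp_mul_Lq (volume : Measure ℂ) hcs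
        (f := fun w => M (z - w) ^ (1/s)) (g := fun w => (M (z - w) ^ (1/r)) * F w)
        (by fun_prop) (by fun_prop)
      refine hHo.trans (le_of_eq ?_)
      have e1 : ∀ a : ℂ, ((fun w => M (z - w) ^ (1/s)) a) ^ s = M (z - a) := fun a => by
        show (M (z - a) ^ (1/s)) ^ s = M (z - a)
        rw [← ENNReal.rpow_mul, one_div_mul_cancel hs0.ne', ENNReal.rpow_one]
      have e2 : ∀ a : ℂ, ((fun w => M (z - w) ^ (1/r) * F w) a) ^ r = M (z - a) * F a ^ r :=
        fun a => by
        show (M (z - a) ^ (1/r) * F a) ^ r = M (z - a) * F a ^ r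
        rw [ENNReal.mul_rpow_of_nonneg _ _ hr0.le, ← ENNReal.rpow_mul,
          one_div_mul_cancel hr0.ne', ENNReal.rpow_one]
      rw [lintegral_congr e1, lintegral_congr e2, LLL_conv_lintegral_inner M hM z]
    rw [eLpNorm_eq_lintegral_rpow_enorm_toReal hp0 hpt, eLpNorm_eq_lintegral_rpow_enorm_toReal hp0 hpt]
    have key : (∫⁻ z, (‖g z‖₊ : ENNReal) ^ r ∂volume)
        ≤ (A ^ (1/s)) ^ r * (A * ∫⁻ w, F w ^ r ∂volume) := by
      calc (∫⁻ z, (‖g z‖₊ : ENNReal) ^ r ∂volume)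
          ≤ ∫⁻ z, (A ^ (1/s)) ^ r * S z ∂volume := by
            refine lintegral_mono fun z => ?_
            calc ((‖g z‖₊ : ENNReal)) ^ r ≤ (A ^ (1/s) * S z ^ (1/r)) ^ r :=
                ENNReal.rpow_le_rpow ((hg z).trans (holder z)) hr0.le
              _ = (A ^ (1/s)) ^ r * S z := by
                rw [ENNReal.mul_rpow_of_nonneg _ _ hr0.le]
                congr 1
                rw [← ENNReal.rpow_mul, one_div_mul_cancel hr0.ne', ENNReal.rpow_one]
        _ = (A ^ (1/s)) ^ r * ∫⁻ z, S z ∂volume := by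
            rw [lintegral_const_mul' _ _ (by
              exact ENNReal.rpow_ne_top_of_nonneg hr0.le
                (ENNReal.rpow_ne_top_of_nonneg (by positivity) hAt))]
        _ = (A ^ (1/s)) ^ r * (A * ∫⁻ w, F w ^ r ∂volume) := by
            rw [hSdef, LLL_swap_lemma M hM _ hFr]
    calc (∫⁻ z, (‖g z‖₊ : ENNReal) ^ r ∂volume) ^ (1/r)
        ≤ ((A ^ (1/s)) ^ r * (A * ∫⁻ w, F w ^ r ∂volume)) ^ (1/r) :=
          ENNReal.rpow_le_rpow key (by positivity)
      _ = A ^ ((1:ℝ)/s * (r * (1/r))) * (A ^ ((1:ℝ)/r) * (∫⁻ w, F w ^ r ∂volume) ^ ((1:ℝ)/r)) := by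
          rw [ENNReal.mul_rpow_of_nonneg _ _ (by positivity : (0:ℝ) ≤ 1/r),
            ENNReal.mul_rpow_of_nonneg _ _ (by positivity : (0:ℝ) ≤ 1/r),
            ← ENNReal.rpow_mul, ← ENNReal.rpow_mul]
      _ = A ^ ((1:ℝ)/s) * (A ^ ((1:ℝ)/r) * (∫⁻ w, F w ^ r ∂volume) ^ ((1:ℝ)/r)) := by
          congr 2
          field_simp
      _ = (A ^ ((1:ℝ)/s) * A ^ ((1:ℝ)/r)) * (∫⁻ w, F w ^ r ∂volume) ^ ((1:ℝ)/r) := by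
          ring
      _ = A * (∫⁻ w, F w ^ r ∂volume) ^ (1/r) := by
          rw [← ENNReal.rpow_add _ _ hA0 hAt, h1sr, ENNReal.rpow_one]

lemma LLL_peetre {a : ℝ} (ha : 0 ≤ a) (z w : ℂ) :
    (1 + ‖z‖ ^ 2) ^ a ≤ 2 ^ a * ((1 + ‖z - w‖ ^ 2) ^ a * (1 + ‖w‖ ^ 2) ^ a) := by
  have htri : ‖z‖ ≤ ‖z - w‖ + ‖w‖ := by
    simpa using norm_add_le (z - w) w
  have h1 : (1 + ‖z‖ ^ 2 : ℝ) ≤ 2 * ((1 + ‖z - w‖ ^ 2) * (1 + ‖w‖ ^ 2)) := by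
    nlinarith [norm_nonneg (z - w), norm_nonneg w, norm_nonneg z,
      sq_nonneg (‖z - w‖ * ‖w‖), sq_nonneg (‖z - w‖ - ‖w‖)]
  calc (1 + ‖z‖ ^ 2 : ℝ) ^ a ≤ (2 * ((1 + ‖z - w‖ ^ 2) * (1 + ‖w‖ ^ 2))) ^ a :=
      Real.rpow_le_rpow (by positivity) h1 ha
    _ = 2 ^ a * ((1 + ‖z - w‖ ^ 2) ^ a * (1 + ‖w‖ ^ 2) ^ a) := by
      rw [Real.mul_rpow (by norm_num) (by positivity),
        Real.mul_rpow (by positivity) (by positivity)]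

lemma LLL_normsq (z w : ℂ) :
    ‖z - w‖ ^ 2 = ‖z‖ ^ 2 - 2 * ((starRingEnd ℂ) w * z).re + ‖w‖ ^ 2 := by
  simp only [Complex.sq_norm, Complex.normSq_apply, Complex.sub_re,
    Complex.sub_im, Complex.mul_re, Complex.conj_re, Complex.conj_im]
  ring

end LLLhelpers

/-- The lowest Landau level projector, given by the kernel
`K(z,w) = (1/π) e^{-|z|²/2 - |w|²/2 + w̄ z}`. -/
noncomputable def LLLProj (u : ℂ → ℂ) (z : ℂ) : ℂ :=
  (Real.pi : ℂ)⁻¹ * Complex.exp (-(‖z‖ : ℂ) ^ 2 / 2) *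
    ∫ w : ℂ, Complex.exp ((starRingEnd ℂ) w * z - (‖w‖ : ℂ) ^ 2 / 2) * u w

/-- The projector `Π` extends boundedly to the weighted spaces `L^{p,α}`:
for every measurable `u` with `‖⟨z⟩^α u‖_{L^p} < ∞`, the defining integral of `Πu`
converges absolutely at every point and `‖⟨z⟩^α Πu‖_{L^p} ≤ C ‖⟨z⟩^α u‖_{L^p}`. -/
theorem lll_proj_bounded_weighted (p : ENNReal) (hp : 1 ≤ p) (α : ℝ) (hα : 0 ≤ α) :
    ∃ C : ℝ, 0 < C ∧ ∀ u : ℂ → ℂ,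
      AEStronglyMeasurable u (volume : Measure ℂ) →
      eLpNorm (fun z : ℂ => (((1 + ‖z‖ ^ 2) ^ (α / 2) : ℝ) : ℂ) * u z) p volume < ⊤ →
      (∀ z : ℂ, Integrable
          (fun w : ℂ => Complex.exp ((starRingEnd ℂ) w * z - (‖w‖ : ℂ) ^ 2 / 2) * u w)
          (volume : Measure ℂ)) ∧
      eLpNorm (fun z : ℂ => (((1 + ‖z‖ ^ 2) ^ (α / 2) : ℝ) : ℂ) * LLLProj u z) p volume ≤
        ENNReal.ofReal C *
          eLpNorm (fun z : ℂ => (((1 + ‖z‖ ^ 2) ^ (α / 2) : ℝ) : ℂ) * u z) p volume := by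
  have hα2 : 0 ≤ α / 2 := by linarith
  set ρ : ℂ → ℝ := fun x => (1 + ‖x‖ ^ 2) ^ (α / 2) with hρdef
  have hρpos : ∀ x : ℂ, 0 < ρ x := fun x => Real.rpow_pos_of_pos (by positivity) _
  have hρone : ∀ x : ℂ, 1 ≤ ρ x := fun x => by
    rw [hρdef]
    calc (1:ℝ) = 1 ^ (α/2) := (Real.one_rpow _).symm
      _ ≤ (1 + ‖x‖ ^ 2) ^ (α/2) :=
        Real.rpow_le_rpow (by norm_num) (by nlinarith [sq_nonneg ‖x‖]) hα2
  have hρcont : Continuous ρ :=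
    (continuous_const.add ((continuous_norm).pow 2)).rpow_const (fun x => Or.inr hα2)
  set c : ℝ := 2 ^ (α / 2) * Real.pi⁻¹ with hcdef
  have hcpos : 0 < c := by
    have := Real.pi_pos
    positivity
  set φ : ℂ → ℝ := fun x => (1 + ‖x‖ ^ 2) ^ (α / 2) * Real.exp (-(1/2) * ‖x‖ ^ 2) with hφdef
  have hφpos : ∀ x, 0 < φ x := fun x => by
    have := Real.exp_pos (-(1/2) * ‖x‖ ^ 2)
    have := hρpos x
    rw [hφdef]
    positivity
  have hφint : Integrable φ := LLL_gauss2d_integrable (by norm_num) hα2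
  have hφcont : Continuous φ := by
    apply hρcont.mul
    exact Real.continuous_exp.comp (by continuity)
  set M : ℂ → ENNReal := fun x => ENNReal.ofReal (c * φ x) with hMdef
  have hM : Measurable M := by
    apply ENNReal.measurable_ofReal.comp
    exact (continuous_const.mul hφcont).measurable
  have hM0 : ∀ x, M x ≠ 0 := fun x =>
    (ENNReal.ofReal_pos.mpr (mul_pos hcpos (hφpos x))).ne'
  have hMt : ∀ x, M x ≠ ⊤ := fun x => ENNReal.ofReal_ne_top
  have hAeq : (∫⁻ x, M x ∂(volume : Measure ℂ)) = ENNReal.ofReal (∫ x, c * φ x) := by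
    rw [ofReal_integral_eq_lintegral_ofReal (hφint.const_mul c)
      (Filter.Eventually.of_forall fun x => (mul_pos hcpos (hφpos x)).le)]
  have hAt : (∫⁻ x, M x ∂(volume : Measure ℂ)) ≠ ⊤ := by rw [hAeq]; exact ENNReal.ofReal_ne_top
  have hA0 : (∫⁻ x, M x ∂(volume : Measure ℂ)) ≠ 0 := by
    refine ((lintegral_pos_iff_support hM).mpr ?_).ne'
    have hsupp : Function.support M = Set.univ := Set.eq_univ_of_forall fun x => hM0 x
    rw [hsupp]
    exact isOpen_univ.measure_pos volume ⟨0, trivial⟩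
  refine ⟨(∫ x, c * φ x) + 1, ?_, ?_⟩
  · have h0 : 0 ≤ ∫ x, c * φ x := integral_nonneg fun x => (mul_pos hcpos (hφpos x)).le
    linarith
  intro u hu hfin
  set v : ℂ → ℂ := fun z => (((1 + ‖z‖ ^ 2) ^ (α / 2) : ℝ) : ℂ) * u z with hvdef
  have hv : AEStronglyMeasurable v (volume : Measure ℂ) :=
    ((Complex.continuous_ofReal.comp hρcont).aestronglyMeasurable).mul hu
  have hvmem : MemLp v p volume := ⟨hv, hfin⟩
  -- the conjugate exponent
  set q : ENNReal := (1 - p⁻¹)⁻¹ with hqdef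
  have hpqr : (1 : ENNReal) / 1 = 1 / q + 1 / p := by
    rw [hqdef, one_div, one_div, one_div, inv_inv, inv_one]
    exact (tsub_add_cancel_of_le (ENNReal.inv_le_one.mpr hp)).symm
  -- Part 1: integrability
  have hker : ∀ z w : ℂ, ‖Complex.exp ((starRingEnd ℂ) w * z - (‖w‖ : ℂ) ^ 2 / 2)‖
      = Real.exp (((starRingEnd ℂ) w * z).re - ‖w‖ ^ 2 / 2) := by
    intro z w
    rw [Complex.norm_exp]
    congr 1
    have : ((‖w‖ : ℂ) ^ 2 / 2) = ((‖w‖ ^ 2 / 2 : ℝ) : ℂ) := by push_cast; ring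
    rw [Complex.sub_re, this, Complex.ofReal_re]
  have hint : ∀ z : ℂ, Integrable
      (fun w : ℂ => Complex.exp ((starRingEnd ℂ) w * z - (‖w‖ : ℂ) ^ 2 / 2) * u w)
      (volume : Measure ℂ) := by
    intro z
    set φz : ℂ → ℂ := fun w =>
      Complex.exp ((starRingEnd ℂ) w * z - (‖w‖ : ℂ) ^ 2 / 2) / ((ρ w : ℝ) : ℂ) with hφzdef
    have hφzm : AEStronglyMeasurable φz (volume : Measure ℂ) := by
      apply Continuous.aestronglyMeasurable
      apply Continuous.div
      · apply Complex.continuous_exp.comp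
        apply Continuous.sub
        · exact (Complex.continuous_conj.mul continuous_const)
        · exact ((Complex.continuous_ofReal.comp continuous_norm).pow 2).div_const 2
      · exact Complex.continuous_ofReal.comp hρcont
      · exact fun w => Complex.ofReal_ne_zero.mpr (hρpos w).ne'
    have hφzbd : ∀ w, ‖φz w‖ ≤ Real.exp (‖z‖ ^ 2) * Real.exp (-(1/4) * ‖w‖ ^ 2) := by
      intro w
      rw [hφzdef]
      simp only [norm_div]
      have h1 : ‖(((ρ w : ℝ)) : ℂ)‖ = ρ w := by
        rw [Complex.norm_real, Real.norm_eq_abs, abs_of_pos (hρpos w)]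
      rw [h1, hker z w]
      have h2 : ((starRingEnd ℂ) w * z).re ≤ ‖w‖ * ‖z‖ := by
        calc ((starRingEnd ℂ) w * z).re ≤ ‖(starRingEnd ℂ) w * z‖ := Complex.re_le_norm _
          _ = ‖w‖ * ‖z‖ := by rw [norm_mul, RCLike.norm_conj]
      have h3 : ((starRingEnd ℂ) w * z).re - ‖w‖ ^ 2 / 2 ≤ ‖z‖ ^ 2 + -(1/4) * ‖w‖ ^ 2 := by
        nlinarith [sq_nonneg (‖w‖ / 2 - ‖z‖)]
      calc Real.exp (((starRingEnd ℂ) w * z).re - ‖w‖ ^ 2 / 2) / ρ w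
          ≤ Real.exp (((starRingEnd ℂ) w * z).re - ‖w‖ ^ 2 / 2) / 1 := by
            exact div_le_div_of_nonneg_left (Real.exp_pos _).le zero_lt_one (hρone w)
          _ = Real.exp (((starRingEnd ℂ) w * z).re - ‖w‖ ^ 2 / 2) := div_one _
          _ ≤ Real.exp (‖z‖ ^ 2 + -(1/4) * ‖w‖ ^ 2) := Real.exp_le_exp.mpr h3
          _ = Real.exp (‖z‖ ^ 2) * Real.exp (-(1/4) * ‖w‖ ^ 2) := Real.exp_add _ _
    have hφzmem : MemLp φz q volume :=
      LLL_gauss_memLp (by norm_num : (0:ℝ) < 1/4) q hφzm hφzbd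
    have hsmul : MemLp (φz • v) 1 volume := hvmem.smul hφzmem (hpqr := ⟨by simpa only [one_div] using hpqr.symm⟩)
    have heq : (fun w : ℂ => Complex.exp ((starRingEnd ℂ) w * z - (‖w‖ : ℂ) ^ 2 / 2) * u w)
        = φz • v := by
      funext w
      have hne : (((ρ w : ℝ)) : ℂ) ≠ 0 := Complex.ofReal_ne_zero.mpr (hρpos w).ne'
      show Complex.exp ((starRingEnd ℂ) w * z - (‖w‖ : ℂ) ^ 2 / 2) * u w = φz w * v w
      rw [hφzdef, hvdef]
      show Complex.exp _ * u w
        = Complex.exp _ / ((ρ w : ℝ) : ℂ) * ((((1 + ‖w‖ ^ 2) ^ (α / 2) : ℝ) : ℂ) * u w)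
      have : (((1 + ‖w‖ ^ 2) ^ (α / 2) : ℝ) : ℂ) = ((ρ w : ℝ) : ℂ) := rfl
      rw [this]
      field_simp
    rw [heq]
    exact (memLp_one_iff_integrable).mp hsmul
  refine ⟨hint, ?_⟩
  have hπ : (0:ℝ) < Real.pi := Real.pi_pos
  have hg : ∀ z : ℂ,
      (‖(((1 + ‖z‖ ^ 2) ^ (α / 2) : ℝ) : ℂ) * LLLProj u z‖₊ : ENNReal)
      ≤ ∫⁻ w, M (z - w) * (‖v w‖₊ : ENNReal) ∂volume := by
    intro z
    have hexpz : ‖Complex.exp (-(‖z‖ : ℂ) ^ 2 / 2)‖ = Real.exp (-‖z‖ ^ 2 / 2) := by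
      rw [Complex.norm_exp]
      congr 1
      have h : (-(‖z‖ : ℂ) ^ 2 / 2) = ((-‖z‖ ^ 2 / 2 : ℝ) : ℂ) := by push_cast; ring
      rw [h, Complex.ofReal_re]
    have hnorm1 : ‖(((1 + ‖z‖ ^ 2) ^ (α / 2) : ℝ) : ℂ) * LLLProj u z‖
        = ((1 + ‖z‖ ^ 2) ^ (α / 2) * (Real.pi⁻¹ * Real.exp (-‖z‖ ^ 2 / 2))) *
          ‖∫ w : ℂ, Complex.exp ((starRingEnd ℂ) w * z - (‖w‖ : ℂ) ^ 2 / 2) * u w‖ := by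
      unfold LLLProj
      rw [norm_mul, norm_mul, norm_mul, norm_inv, hexpz]
      rw [Complex.norm_real, Complex.norm_real, Real.norm_eq_abs, Real.norm_eq_abs,
        abs_of_pos hπ, abs_of_pos (Real.rpow_pos_of_pos (by positivity) _)]
      ring
    calc (‖(((1 + ‖z‖ ^ 2) ^ (α / 2) : ℝ) : ℂ) * LLLProj u z‖₊ : ENNReal)
        = ENNReal.ofReal ((1 + ‖z‖ ^ 2) ^ (α / 2) * (Real.pi⁻¹ * Real.exp (-‖z‖ ^ 2 / 2))) *
          (‖∫ w : ℂ, Complex.exp ((starRingEnd ℂ) w * z - (‖w‖ : ℂ) ^ 2 / 2) * u w‖₊ :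
            ENNReal) := by
          rw [← enorm_eq_nnnorm, ← ofReal_norm, hnorm1,
            ENNReal.ofReal_mul (by positivity), ofReal_norm, enorm_eq_nnnorm]
      _ ≤ ENNReal.ofReal ((1 + ‖z‖ ^ 2) ^ (α / 2) * (Real.pi⁻¹ * Real.exp (-‖z‖ ^ 2 / 2))) *
          ∫⁻ w, (‖Complex.exp ((starRingEnd ℂ) w * z - (‖w‖ : ℂ) ^ 2 / 2) * u w‖₊ : ENNReal)
            ∂volume :=
          mul_le_mul_right (enorm_integral_le_lintegral_enorm _) _
      _ = ∫⁻ w, ENNReal.ofReal ((1 + ‖z‖ ^ 2) ^ (α / 2) * (Real.pi⁻¹ * Real.exp (-‖z‖ ^ 2 / 2)))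
            * (‖Complex.exp ((starRingEnd ℂ) w * z - (‖w‖ : ℂ) ^ 2 / 2) * u w‖₊ : ENNReal)
            ∂volume :=
          (lintegral_const_mul' _ _ ENNReal.ofReal_ne_top).symm
      _ ≤ ∫⁻ w, M (z - w) * (‖v w‖₊ : ENNReal) ∂volume := by
          refine lintegral_mono fun w => ?_
          have hL : (‖Complex.exp ((starRingEnd ℂ) w * z - (‖w‖ : ℂ) ^ 2 / 2) * u w‖₊ : ENNReal)
              = ENNReal.ofReal
                  (Real.exp (((starRingEnd ℂ) w * z).re - ‖w‖ ^ 2 / 2) * ‖u w‖) := by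
            rw [← enorm_eq_nnnorm, ← ofReal_norm, norm_mul, hker z w]
          have hR : (‖v w‖₊ : ENNReal)
              = ENNReal.ofReal ((1 + ‖w‖ ^ 2) ^ (α / 2) * ‖u w‖) := by
            rw [← enorm_eq_nnnorm, ← ofReal_norm]
            show ENNReal.ofReal ‖(((1 + ‖w‖ ^ 2) ^ (α / 2) : ℝ) : ℂ) * u w‖ = _
            rw [norm_mul, Complex.norm_real, Real.norm_eq_abs,
              abs_of_pos (Real.rpow_pos_of_pos (by positivity) _)]
          rw [hL, hR, hMdef]
          rw [← ENNReal.ofReal_mul (by positivity), ← ENNReal.ofReal_mul (by positivity)]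
          apply ENNReal.ofReal_le_ofReal
          have hexpid : Real.exp (-‖z‖ ^ 2 / 2) *
              Real.exp (((starRingEnd ℂ) w * z).re - ‖w‖ ^ 2 / 2)
              = Real.exp (-(1/2) * ‖z - w‖ ^ 2) := by
            rw [← Real.exp_add]
            congr 1
            have h := LLL_normsq z w
            linarith
          have hP := LLL_peetre hα2 z w
          calc (1 + ‖z‖ ^ 2) ^ (α / 2) * (Real.pi⁻¹ * Real.exp (-‖z‖ ^ 2 / 2)) *
              (Real.exp (((starRingEnd ℂ) w * z).re - ‖w‖ ^ 2 / 2) * ‖u w‖)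
              = (Real.pi⁻¹ * (Real.exp (-‖z‖ ^ 2 / 2) *
                  Real.exp (((starRingEnd ℂ) w * z).re - ‖w‖ ^ 2 / 2)) * ‖u w‖) *
                ((1 + ‖z‖ ^ 2) ^ (α / 2)) := by ring
            _ = (Real.pi⁻¹ * Real.exp (-(1/2) * ‖z - w‖ ^ 2) * ‖u w‖) *
                ((1 + ‖z‖ ^ 2) ^ (α / 2)) := by rw [hexpid]
            _ ≤ (Real.pi⁻¹ * Real.exp (-(1/2) * ‖z - w‖ ^ 2) * ‖u w‖) *
                (2 ^ (α / 2) * ((1 + ‖z - w‖ ^ 2) ^ (α / 2) * (1 + ‖w‖ ^ 2) ^ (α / 2))) := by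
                apply mul_le_mul_of_nonneg_left hP (by positivity)
            _ = c * φ (z - w) * ((1 + ‖w‖ ^ 2) ^ (α / 2) * ‖u w‖) := by
                rw [hcdef, hφdef]
                ring
  have hmain := LLL_schur_bound M hM hM0 hMt hA0 hAt p hp v
    (fun z : ℂ => (((1 + ‖z‖ ^ 2) ^ (α / 2) : ℝ) : ℂ) * LLLProj u z) hv hg
  refine hmain.trans (mul_le_mul_left ?_ _)
  rw [hAeq]
  exact ENNReal.ofReal_le_ofReal (by linarith)
end

section
/- For n ∈ ℕ and α ∈ ℂ, define φ_n^α(z) = (π n!)^{−1/2} (z − \overline{α})^n exp(−|z|²/2 − |α|²/2 + α z). Then ∫_ℂ |φ_n^α(z)|² dL(z) = 1, and for every z ∈ ℂ, Π(|φ_n^α|² φ_n^α)(z) = ((2n)!/(π (n!)² 2^{2n+1})) · φ_n^α(z). In particular φ_n^α is an M-stationary wave of the cubic lowest Landau level equation with λ = (2n)!/(π (n!)² 2^{2n+1}). -/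
open MeasureTheory

/-- The translated Hermite profile `φ_n^α(z) = (π n!)^{-1/2} (z-ᾱ)^n e^{-|z|²/2-|α|²/2+αz}`. -/
noncomputable def phiNA (n : ℕ) (α : ℂ) (z : ℂ) : ℂ :=
  ((Real.sqrt (Real.pi * n.factorial) : ℝ) : ℂ)⁻¹ * (z - (starRingEnd ℂ) α) ^ n *
    Complex.exp (-(‖z‖ : ℂ) ^ 2 / 2 - (‖α‖ : ℂ) ^ 2 / 2 + α * z)

open Real Set


lemma radial_base (a : ℕ) {c : ℝ} (hc : 0 < c) :
    ∫ r in Ioi (0:ℝ), r ^ (2*a+1) * rexp (-c * r^2) = a.factorial / (2 * c^(a+1)) := by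
  have h := integral_rpow_mul_exp_neg_mul_rpow (p := 2) (q := (2*a+1 : ℝ))
    (b := c) (by norm_num) (by have := Nat.cast_nonneg (α := ℝ) a; linarith) hc
  have h1 : ∫ r in Ioi (0:ℝ), r ^ (2*a+1) * rexp (-c * r^2)
      = ∫ x in Ioi (0:ℝ), x ^ ((2*a+1 : ℕ) : ℝ) * rexp (-c * x ^ (2:ℝ)) := by
    refine setIntegral_congr_fun measurableSet_Ioi (fun x hx => ?_)
    rw [rpow_natCast, rpow_two]
  rw [h1]
  push_cast at h ⊢
  rw [h]
  have h2 : ((2*a+1 : ℝ) + 1)/2 = (a + 1 : ℝ) := by ring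
  rw [h2]
  have h3 : Real.Gamma ((a:ℝ) + 1) = a.factorial := by
    exact_mod_cast Real.Gamma_nat_eq_factorial a
  rw [h3]
  have h4 : (-(2*(a:ℝ)+1+1)/2) = -((a:ℝ)+1) := by ring
  rw [h4, rpow_neg hc.le]
  have : c ^ ((a:ℝ)+1) = c ^ (a+1 : ℕ) := by
    rw [← rpow_natCast]; norm_num
  rw [this]
  ring

lemma angular_zero {m : ℤ} (hm : m ≠ 0) :
    ∫ θ in Ioo (-π) π, Complex.exp (m * θ * Complex.I) = 0 := by
  rw [← integral_Ioc_eq_integral_Ioo, ← intervalIntegral.integral_of_le (by linarith [pi_pos] : -π ≤ π)]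
  have hc : (m : ℂ) * Complex.I ≠ 0 := by
    simp [Complex.I_ne_zero, hm]
  have : ∀ θ : ℝ, Complex.exp (m * θ * Complex.I) = Complex.exp ((m * Complex.I) * θ) := by
    intro θ; ring_nf
  simp_rw [this]
  rw [integral_exp_mul_complex hc]
  have e1 : (m : ℂ) * Complex.I * π = m * (π * Complex.I) := by push_cast; ring
  have e2 : (m : ℂ) * Complex.I * (-π : ℝ) = ((-m : ℤ) : ℂ) * (π * Complex.I) := by push_cast; ring
  rw [e1, e2, Complex.exp_int_mul, Complex.exp_int_mul]
  have : Complex.exp (π * Complex.I) = -1 := by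
    simpa using Complex.exp_pi_mul_I
  rw [this]
  have : ((-1 : ℂ)) ^ (-m) = ((-1:ℂ)) ^ m := by
    have h5 : ((-1:ℂ))^m * ((-1:ℂ))^m = 1 := by
      rw [← zpow_add₀ (by norm_num : (-1:ℂ) ≠ 0), show m+m = 2*m by ring, zpow_mul]
      norm_num
    rw [zpow_neg]
    exact inv_eq_of_mul_eq_one_left h5
  rw [this]
  simp

lemma polar_symm_eq {p : ℝ × ℝ} :
    Complex.polarCoord.symm p = (p.1 : ℂ) * Complex.exp (p.2 * Complex.I) := by
  rw [Complex.polarCoord_symm_apply, Complex.exp_mul_I]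
  push_cast
  ring

lemma gauss_moment_even (a : ℕ) {c : ℝ} (hc : 0 < c) :
    ∫ v : ℂ, ‖v‖^(2*a) * rexp (-c * ‖v‖^2) = π * a.factorial / c^(a+1) := by
  rw [← Complex.integral_comp_polarCoord_symm]
  have h1 : ∀ p ∈ polarCoord.target,
      p.1 • (‖Complex.polarCoord.symm p‖^(2*a) * rexp (-c * ‖Complex.polarCoord.symm p‖^2))
      = (p.1^(2*a+1) * rexp (-c * p.1^2)) * (1 : ℝ) := by
    rintro ⟨r, θ⟩ ⟨hr, hθ⟩
    have hr' : (0:ℝ) < r := hr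
    have hn : ‖Complex.polarCoord.symm (r, θ)‖ = r := by
      rw [Complex.norm_polarCoord_symm, abs_of_pos hr']
    simp only [hn, smul_eq_mul, mul_one]
    ring
  rw [setIntegral_congr_fun (polarCoord.open_target.measurableSet) h1, Measure.volume_eq_prod,
    polarCoord_target,
    setIntegral_prod_mul (f := fun r : ℝ => r^(2*a+1) * rexp (-c * r^2)) (g := fun _ : ℝ => (1:ℝ))]
  rw [radial_base a hc]
  simp only [integral_const, MeasurableSet.univ, Measure.restrict_apply, univ_inter, volume_Ioo,
    smul_eq_mul, mul_one]
  rw [measureReal_restrict_apply_univ, Real.volume_real_Ioo_of_le (by linarith [pi_pos] : -π ≤ π)]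
  field_simp
  ring

lemma gauss_moment_complex (a b : ℕ) {c : ℝ} (hc : 0 < c) :
    ∫ v : ℂ, v^a * ((starRingEnd ℂ) v)^b * (rexp (-c * ‖v‖^2) : ℂ)
      = if a = b then ((π * a.factorial / c^(a+1) : ℝ) : ℂ) else 0 := by
  rw [← Complex.integral_comp_polarCoord_symm]
  set m : ℤ := (a:ℤ) - (b:ℤ) with hm
  have h1 : ∀ p ∈ polarCoord.target,
      p.1 • ((Complex.polarCoord.symm p)^a * ((starRingEnd ℂ) (Complex.polarCoord.symm p))^b *
        (rexp (-c * ‖Complex.polarCoord.symm p‖^2) : ℂ))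
      = (((p.1^(a+b+1) * rexp (-c * p.1^2) : ℝ)) : ℂ) * Complex.exp (m * p.2 * Complex.I) := by
    rintro ⟨r, θ⟩ ⟨hr, hθ⟩
    have hr' : (0:ℝ) < r := hr
    have hn : ‖Complex.polarCoord.symm (r, θ)‖ = r := by
      rw [Complex.norm_polarCoord_symm, abs_of_pos hr']
    have hsymm : Complex.polarCoord.symm (r, θ) = (r : ℂ) * Complex.exp (θ * Complex.I) :=
      polar_symm_eq
    have hconj : (starRingEnd ℂ) (Complex.polarCoord.symm (r, θ))
        = (r : ℂ) * Complex.exp (-(θ * Complex.I)) := by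
      rw [hsymm, map_mul, ← Complex.exp_conj]
      simp
    rw [hn, hconj, hsymm, mul_pow, mul_pow, ← Complex.exp_nat_mul, ← Complex.exp_nat_mul,
      Complex.real_smul]
    have hsplit : Complex.exp ((m:ℂ) * θ * Complex.I)
        = Complex.exp (↑a * (↑θ * Complex.I)) * Complex.exp ((b:ℂ) * -(↑θ * Complex.I)) := by
      rw [← Complex.exp_add]; congr 1; rw [hm]; push_cast; ring
    rw [hsplit]
    push_cast
    ring
  rw [setIntegral_congr_fun (polarCoord.open_target.measurableSet) h1, Measure.volume_eq_prod,
    polarCoord_target,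
    setIntegral_prod_mul (f := fun r : ℝ => ((r^(a+b+1) * rexp (-c * r^2) : ℝ) : ℂ))
      (g := fun θ : ℝ => Complex.exp (m * θ * Complex.I))]
  by_cases hab : a = b
  · subst hab
    have hm0 : m = 0 := by simp [hm]
    simp only [hm0, Int.cast_zero, zero_mul, Complex.exp_zero]
    have hro : ∫ x in Ioi (0:ℝ), ((x^(a+a+1) * rexp (-c * x^2) : ℝ) : ℂ)
        = ((∫ x in Ioi (0:ℝ), x^(a+a+1) * rexp (-c * x^2) : ℝ) : ℂ) := integral_ofReal
    rw [hro]
    have h2a : a + a + 1 = 2*a + 1 := by ring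
    rw [h2a, radial_base a hc]
    simp only [integral_const, MeasurableSet.univ, Measure.restrict_apply, univ_inter, volume_Ioo,
      smul_eq_mul, mul_one, sub_neg_eq_add, if_pos rfl]
    rw [measureReal_restrict_apply_univ, Real.volume_real_Ioo_of_le (by linarith [pi_pos] : -π ≤ π), if_pos trivial]
    rw [Complex.real_smul, mul_one]
    have hcne : ((c:ℂ))^(a+1) ≠ 0 := pow_ne_zero _ (by exact_mod_cast hc.ne')
    push_cast
    field_simp
    ring
  · have hmne : m ≠ 0 := by
      rw [hm]; intro h; apply hab
      exact_mod_cast sub_eq_zero.mp h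
    rw [angular_zero hmne, mul_zero, if_neg hab]

lemma pow_le_K_exp (j : ℕ) {c : ℝ} (hc : 0 < c) {x : ℝ} (hx : 0 ≤ x) :
    x ^ j * rexp (-c * x^2) ≤ ((j.factorial * (2/c)^j + 1)) * rexp (-(c/2) * x^2) := by
  have hu : (0:ℝ) ≤ (c/2) * x^2 := by positivity
  have h1 : ((c/2) * x^2)^j / j.factorial ≤ rexp ((c/2)*x^2) :=
    Real.pow_div_factorial_le_exp _ hu j
  have h2 : x^(2*j) ≤ j.factorial * (2/c)^j * rexp ((c/2)*x^2) := by
    have := (div_le_iff₀ (by positivity : (0:ℝ) < (j.factorial : ℝ))).mp h1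
    calc x^(2*j) = ((c/2)*x^2)^j * (2/c)^j := by
          rw [← mul_pow, pow_mul]
          congr 1
          field_simp
      _ ≤ (rexp ((c/2)*x^2) * j.factorial) * (2/c)^j := by
          apply mul_le_mul_of_nonneg_right this (by positivity)
      _ = j.factorial * (2/c)^j * rexp ((c/2)*x^2) := by ring
  have h3 : x^j ≤ x^(2*j) + 1 := by
    rcases le_total x 1 with h | h
    · have : x^j ≤ 1 := pow_le_one₀ hx h
      have h0 : 0 ≤ x^(2*j) := by positivity
      linarith
    · have : x^j ≤ x^(2*j) := pow_le_pow_right₀ h (by omega)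
      linarith
  have h4 : x^j ≤ (j.factorial * (2/c)^j + 1) * rexp ((c/2)*x^2) := by
    have h5 : (1:ℝ) ≤ rexp ((c/2)*x^2) := Real.one_le_exp hu
    calc x^j ≤ x^(2*j) + 1 := h3
      _ ≤ j.factorial * (2/c)^j * rexp ((c/2)*x^2) + 1 * rexp ((c/2)*x^2) := by
          apply add_le_add h2; linarith
      _ = (j.factorial * (2/c)^j + 1) * rexp ((c/2)*x^2) := by ring
  calc x^j * rexp (-c * x^2)
      ≤ ((j.factorial * (2/c)^j + 1) * rexp ((c/2)*x^2)) * rexp (-c*x^2) := by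
        apply mul_le_mul_of_nonneg_right h4 (Real.exp_nonneg _)
    _ = (j.factorial * (2/c)^j + 1) * rexp (-(c/2) * x^2) := by
        rw [mul_assoc, ← Real.exp_add]
        congr 2
        ring

lemma gauss_integrable (j : ℕ) {c : ℝ} (hc : 0 < c) :
    Integrable (fun v : ℂ => ‖v‖ ^ j * rexp (-c * ‖v‖ ^ 2)) := by
  have hbase := GaussianFourier.integrable_cexp_neg_mul_sq_norm_add (V := ℂ) (b := ((c/2:ℝ):ℂ))
    (by simp [hc] : 0 < ((c/2:ℝ):ℂ).re) 0 0
  have hbase2 : Integrable (fun v : ℂ => rexp (-(c/2) * ‖v‖^2)) := by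
    have := hbase.norm
    refine this.congr ?_
    filter_upwards with v
    simp only [zero_mul, add_zero]
    rw [Complex.norm_exp,
      show (-((c/2:ℝ):ℂ) * (‖v‖:ℂ)^2) = ((-(c/2) * ‖v‖^2 : ℝ):ℂ) by push_cast; ring,
      Complex.ofReal_re]
  refine Integrable.mono' (hbase2.const_mul ((j.factorial * (2/c)^j + 1))) ?_ ?_
  · apply Continuous.aestronglyMeasurable
    continuity
  · filter_upwards with v
    rw [Real.norm_eq_abs, abs_of_nonneg (by positivity)]
    exact pow_le_K_exp j hc (norm_nonneg v)

lemma summable_T (n : ℕ) {ρ : ℝ} (hρ : 0 ≤ ρ) :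
    Summable (fun k : ℕ => ρ^k / k.factorial *
      ((((3*n+k+1)/2 : ℕ).factorial : ℝ) / 2^(((3*n+k+1)/2 : ℕ) + 1))) := by
  set T : ℕ → ℝ := fun k => ρ^k / k.factorial *
      ((((3*n+k+1)/2 : ℕ).factorial : ℝ) / 2^(((3*n+k+1)/2 : ℕ) + 1)) with hT
  have hpos : ∀ k, 0 ≤ T k := by
    intro k
    apply mul_nonneg (by positivity) (by positivity)
  have hstep : ∀ k : ℕ, k ≥ max (3*n+3) (Nat.ceil (2*ρ^2)) → T (k+2) ≤ (1/2) * T k := by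
    intro k hk
    have hk1 : 3*n+3 ≤ k := le_of_max_le_left hk
    have hk2 : 2*ρ^2 ≤ k := (Nat.ceil_le.mp (le_refl _)).trans (by exact_mod_cast Nat.cast_le.mpr (le_of_max_le_right hk))
    set u := (3*n+k+1)/2 with hu
    have huu : (3*n+(k+2)+1)/2 = u + 1 := by omega
    have hfac : ((k+2).factorial : ℝ) = (k+2) * (k+1) * k.factorial := by
      rw [Nat.factorial_succ, Nat.factorial_succ]; push_cast; ring
    have hufac : ((u+1).factorial : ℝ) = (u+1) * u.factorial := by
      rw [Nat.factorial_succ]; push_cast; ring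
    have hTk2 : T (k+2) = T k * (ρ^2 * (u+1)) / (((k+2) * (k+1)) * 2) := by
      rw [hT]
      simp only [huu]
      rw [hfac, hufac, pow_succ, pow_succ]
      have hkf : (k.factorial : ℝ) ≠ 0 := by positivity
      field_simp
      ring
    rw [hTk2]
    have hub : (u:ℝ) + 1 ≤ 3*n+k+3 := by
      have : u ≤ 3*n+k+1 := Nat.div_le_self _ _
      have := Nat.cast_le (α := ℝ).mpr this
      push_cast at this ⊢
      linarith
    have hb1 : (3*(n:ℝ)+k+3) ≤ 2*k := by
      have := Nat.cast_le (α := ℝ).mpr hk1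
      push_cast at this
      linarith
    have key : ρ^2 * ((u:ℝ)+1) ≤ ((k+2) * (k+1)) := by
      calc ρ^2 * ((u:ℝ)+1) ≤ ρ^2 * (3*n+k+3) := by
            apply mul_le_mul_of_nonneg_left hub (by positivity)
        _ ≤ ρ^2 * (2*k) := by
            apply mul_le_mul_of_nonneg_left hb1 (by positivity)
        _ = (2*ρ^2) * k := by ring
        _ ≤ (k:ℝ) * k := by
            apply mul_le_mul_of_nonneg_right hk2 (Nat.cast_nonneg k)
        _ ≤ ((k:ℝ)+2) * ((k:ℝ)+1) := by nlinarith [Nat.cast_nonneg (α := ℝ) k]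
    rw [div_le_iff₀ (by positivity)]
    calc T k * (ρ^2 * ((u:ℝ)+1)) ≤ T k * (((k:ℝ)+2) * ((k:ℝ)+1)) := by
          apply mul_le_mul_of_nonneg_left key (hpos k)
      _ = 1/2 * T k * ((((k:ℝ)+2) * ((k:ℝ)+1)) * 2) := by ring
  -- even and odd parts
  have heo : ∀ σ : ℕ, Summable (fun j => T (2*j + σ)) := by
    intro σ
    apply summable_of_ratio_norm_eventually_le (r := 1/2) (by norm_num)
    filter_upwards [Filter.eventually_ge_atTop (max (3*n+3) (Nat.ceil (2*ρ^2)))] with j hj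
    have h2 : 2*(j+1) + σ = (2*j+σ) + 2 := by ring
    rw [h2]
    rw [Real.norm_eq_abs, Real.norm_eq_abs, abs_of_nonneg (hpos _), abs_of_nonneg (hpos _)]
    exact hstep (2*j+σ) (le_trans hj (by omega))
  have he := heo 0
  have ho := heo 1
  simp only [add_zero] at he
  exact Summable.even_add_odd he ho

lemma exp_tsum' (z : ℂ) : Complex.exp z = ∑' k : ℕ, z^k / k.factorial := by
  rw [Complex.exp_eq_exp_ℂ, NormedSpace.exp_eq_tsum_div]

lemma key_integral (n : ℕ) (ζ : ℂ) :
    ∫ v : ℂ, ((‖v‖^(2*n) * rexp (-2*‖v‖^2) : ℝ) : ℂ) * v^n * Complex.exp ((starRingEnd ℂ) v * ζ)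
      = ζ^n / n.factorial * ((π * (2*n).factorial / 2^(2*n+1) : ℝ) : ℂ) := by
  classical
  set f : ℕ → ℂ → ℂ := fun k v => (ζ^k / k.factorial) *
    (v^(2*n) * ((starRingEnd ℂ) v)^(n+k) * ((rexp (-2*‖v‖^2) : ℝ) : ℂ)) with hf
  have hvv : ∀ v : ℂ, ((‖v‖^2 : ℝ) : ℂ) = v * (starRingEnd ℂ) v := by
    intro v
    rw [Complex.mul_conj, Complex.normSq_eq_norm_sq]
  have hpt : ∀ v : ℂ, ((‖v‖^(2*n) * rexp (-2*‖v‖^2) : ℝ) : ℂ) * v^n *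
      Complex.exp ((starRingEnd ℂ) v * ζ) = ∑' k, f k v := by
    intro v
    rw [exp_tsum' ((starRingEnd ℂ) v * ζ), ← tsum_mul_left]
    apply tsum_congr
    intro k
    rw [hf]
    have h1 : ((‖v‖^(2*n) : ℝ) : ℂ) = (v * (starRingEnd ℂ) v)^n := by
      rw [pow_mul, Complex.ofReal_pow, hvv]
    rw [Complex.ofReal_mul, h1, mul_pow, mul_pow]
    have hkf : ((k.factorial : ℝ) : ℂ) ≠ 0 := by
      exact_mod_cast Nat.cast_ne_zero.mpr k.factorial_ne_zero
    field_simp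
    ring
  have hnorm : ∀ k v, ‖f k v‖ = ‖ζ‖^k / k.factorial * (‖v‖^(3*n+k) * rexp (-2*‖v‖^2)) := by
    intro k v
    rw [hf]
    simp only [norm_mul, norm_div, norm_pow, RCLike.norm_conj, Complex.norm_real,
      Complex.norm_natCast]
    rw [Real.norm_eq_abs, abs_of_nonneg (Real.exp_nonneg _)]
    rw [show (3*n+k) = (2*n) + (n+k) by ring, pow_add]
    ring
  have hint : ∀ k, Integrable (f k) := by
    intro k
    refine Integrable.mono' (((gauss_integrable (3*n+k) (by norm_num : (0:ℝ) < 2)).const_mul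
      (‖ζ‖^k / k.factorial))) ?_ ?_
    · apply Continuous.aestronglyMeasurable
      rw [hf]
      have hconj : Continuous (fun v : ℂ => ((starRingEnd ℂ) v)^(n+k)) :=
        (Complex.continuous_conj).pow _
      have hexp : Continuous (fun v : ℂ => ((rexp (-2*‖v‖^2) : ℝ) : ℂ)) :=
        Complex.continuous_ofReal.comp (Real.continuous_exp.comp
          (continuous_const.mul ((continuous_norm).pow 2)))
      exact continuous_const.mul (((continuous_pow (2*n)).mul hconj).mul hexp)
    · filter_upwards with v
      rw [hnorm k v]
  have hsummable : Summable (fun k => ∫ v : ℂ, ‖f k v‖) := by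
    set ρ := ‖ζ‖ with hρ
    have hρ0 : 0 ≤ ρ := norm_nonneg ζ
    have hB : Summable (fun k : ℕ => π * (ρ^k / k.factorial *
        ((((3*n+k+1)/2 : ℕ).factorial : ℝ) / 2^(((3*n+k+1)/2 : ℕ) + 1)))
        + (π/2) * (ρ^k / k.factorial)) := by
      exact ((summable_T n hρ0).mul_left π).add
        ((Real.summable_pow_div_factorial ρ).mul_left (π/2))
    refine Summable.of_nonneg_of_le (fun k => integral_nonneg (fun v => norm_nonneg _)) ?_ hB
    intro k
    have h1 : ∫ v : ℂ, ‖f k v‖ = ρ^k / k.factorial *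
        ∫ v : ℂ, ‖v‖^(3*n+k) * rexp (-2*‖v‖^2) := by
      simp_rw [hnorm k]
      rw [integral_const_mul]
    rw [h1]
    set u := (3*n+k+1)/2 with hu
    have hle : ∫ v : ℂ, ‖v‖^(3*n+k) * rexp (-2*‖v‖^2)
        ≤ ∫ v : ℂ, (‖v‖^(2*u) * rexp (-2*‖v‖^2) + ‖v‖^(2*0) * rexp (-2*‖v‖^2)) := by
      refine integral_mono (gauss_integrable _ (by norm_num)) ((gauss_integrable _ (by norm_num)).add
        (gauss_integrable _ (by norm_num))) ?_
      intro v
      have hx : (0:ℝ) ≤ ‖v‖ := norm_nonneg v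
      have h3 : ‖v‖^(3*n+k) ≤ ‖v‖^(2*u) + 1 := by
        rcases le_total ‖v‖ 1 with h | h
        · have : ‖v‖^(3*n+k) ≤ 1 := pow_le_one₀ hx h
          have h0 : 0 ≤ ‖v‖^(2*u) := by positivity
          linarith
        · have : ‖v‖^(3*n+k) ≤ ‖v‖^(2*u) := pow_le_pow_right₀ h (by omega)
          linarith
      calc ‖v‖^(3*n+k) * rexp (-2*‖v‖^2) ≤ (‖v‖^(2*u) + 1) * rexp (-2*‖v‖^2) :=
            mul_le_mul_of_nonneg_right h3 (Real.exp_nonneg _)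
        _ = ‖v‖^(2*u) * rexp (-2*‖v‖^2) + ‖v‖^(2*0) * rexp (-2*‖v‖^2) := by ring
    have heval : ∫ v : ℂ, (‖v‖^(2*u) * rexp (-2*‖v‖^2) + ‖v‖^(2*0) * rexp (-2*‖v‖^2))
        = π * u.factorial / 2^(u+1) + π / 2 := by
      rw [integral_add (gauss_integrable _ (by norm_num)) (gauss_integrable _ (by norm_num)),
        gauss_moment_even u (by norm_num), gauss_moment_even 0 (by norm_num)]
      norm_num
    calc ρ^k / k.factorial * ∫ v : ℂ, ‖v‖^(3*n+k) * rexp (-2*‖v‖^2)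
        ≤ ρ^k / k.factorial * (π * u.factorial / 2^(u+1) + π / 2) := by
          apply mul_le_mul_of_nonneg_left _ (by positivity)
          rw [← heval]; exact hle
      _ = π * (ρ^k / k.factorial * ((u.factorial : ℝ) / 2^(u + 1)))
          + (π/2) * (ρ^k / k.factorial) := by ring
  have hinterchange := MeasureTheory.integral_tsum_of_summable_integral_norm hint hsummable
  have hLHS : ∫ v : ℂ, ((‖v‖^(2*n) * rexp (-2*‖v‖^2) : ℝ) : ℂ) * v^n *
      Complex.exp ((starRingEnd ℂ) v * ζ) = ∑' k, ∫ v : ℂ, f k v := by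
    rw [hinterchange]
    apply integral_congr_ae
    filter_upwards with v
    exact hpt v
  rw [hLHS]
  have hterm : ∀ k, ∫ v : ℂ, f k v = (ζ^k / k.factorial) *
      (if 2*n = n+k then ((π * (2*n).factorial / 2^(2*n+1) : ℝ) : ℂ) else 0) := by
    intro k
    rw [hf]
    simp only
    rw [integral_const_mul]
    congr 1
    have := gauss_moment_complex (2*n) (n+k) (c := 2) (by norm_num)
    exact this
  rw [tsum_congr hterm, tsum_eq_single n]
  · rw [if_pos (by omega)]
  · intro k hk
    rw [if_neg (by omega), mul_zero]

lemma hvv (v : ℂ) : ((‖v‖^2 : ℝ) : ℂ) = v * (starRingEnd ℂ) v := by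
  rw [Complex.mul_conj, Complex.normSq_eq_norm_sq]

lemma norm_phiNA_sq (n : ℕ) (α z : ℂ) :
    ‖phiNA n α z‖^2 = (π * n.factorial)⁻¹ *
      (‖z - (starRingEnd ℂ) α‖^(2*n) * rexp (-‖z - (starRingEnd ℂ) α‖^2)) := by
  have hπ : (0:ℝ) < π * n.factorial := by positivity
  have hns : ∀ w : ℂ, ‖w‖^2 = Complex.normSq w := fun w => by
    rw [Complex.sq_norm]
  rw [phiNA]
  rw [norm_mul, norm_mul, norm_inv, norm_pow]
  rw [Complex.norm_exp]
  rw [Complex.norm_real, Real.norm_eq_abs, abs_of_nonneg (Real.sqrt_nonneg _)]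
  have hre : (-(‖z‖ : ℂ) ^ 2 / 2 - (‖α‖ : ℂ) ^ 2 / 2 + α * z).re
      = -‖z‖^2/2 - ‖α‖^2/2 + (α*z).re := by
    simp [Complex.add_re, Complex.sub_re, Complex.div_re, ← Complex.ofReal_pow,
      Complex.ofReal_re]
  rw [hre]
  rw [mul_pow, mul_pow, inv_pow, Real.sq_sqrt hπ.le, ← pow_mul, mul_comm n 2]
  rw [sq, ← Real.exp_add, mul_assoc]
  congr 2
  rw [hns, hns, hns, Complex.normSq_apply, Complex.normSq_apply, Complex.normSq_apply]
  simp only [Complex.sub_re, Complex.sub_im, Complex.conj_re, Complex.conj_im, Complex.mul_re]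
  ring

/-- `φ_n^α` has unit mass and is an M-stationary wave of (LLL) with
`λ = (2n)!/(π (n!)² 2^{2n+1})`:  `Π(|φ_n^α|² φ_n^α) = λ φ_n^α`. -/
theorem phiNA_is_M_stationary (n : ℕ) (α : ℂ) :
    (∫ z : ℂ, ‖phiNA n α z‖ ^ 2) = 1 ∧
    ∀ z : ℂ, LLLProj (fun w : ℂ => (‖phiNA n α w‖ : ℂ) ^ 2 * phiNA n α w) z =
      ((((2 * n).factorial : ℝ) / (Real.pi * (n.factorial : ℝ) ^ 2 * 2 ^ (2 * n + 1)) : ℝ) : ℂ) *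
        phiNA n α z := by

  have hπ : (0:ℝ) < π * n.factorial := by positivity
  have hvv' : ∀ w : ℂ, ((‖w‖:ℂ))^2 = w * (starRingEnd ℂ) w := by
    intro w
    rw [← Complex.ofReal_pow, hvv]
  constructor
  · have h1 : (∫ z : ℂ, ‖phiNA n α z‖ ^ 2)
        = ∫ z : ℂ, (π * n.factorial)⁻¹ *
          ((fun v : ℂ => ‖v‖^(2*n) * rexp (-1 * ‖v‖^2)) (z - (starRingEnd ℂ) α)) := by
      apply integral_congr_ae
      filter_upwards with z
      rw [norm_phiNA_sq]
      norm_num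
    rw [h1, integral_const_mul, integral_sub_right_eq_self
      (fun v : ℂ => ‖v‖^(2*n) * rexp (-1 * ‖v‖^2)) ((starRingEnd ℂ) α),
      gauss_moment_even n one_pos]
    field_simp
    simp
  · intro z
    set ζ : ℂ := z - (starRingEnd ℂ) α with hζ
    set K : ℂ := (((π * n.factorial)⁻¹ : ℝ) : ℂ) * ((Real.sqrt (π * n.factorial) : ℝ) : ℂ)⁻¹ *
      Complex.exp (α * z - ((‖α‖:ℂ))^2/2) with hK
    set F : ℂ → ℂ := fun w => Complex.exp ((starRingEnd ℂ) w * z - (‖w‖ : ℂ) ^ 2 / 2) *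
      ((‖phiNA n α w‖ : ℂ) ^ 2 * phiNA n α w) with hF
    have htrans : ∫ w : ℂ, F w = ∫ v : ℂ, F (v + (starRingEnd ℂ) α) :=
      (integral_add_right_eq_self F ((starRingEnd ℂ) α)).symm
    have hpoint : ∀ v : ℂ, F (v + (starRingEnd ℂ) α)
        = K * (((‖v‖^(2*n) * rexp (-2*‖v‖^2) : ℝ) : ℂ) * v^n *
          Complex.exp ((starRingEnd ℂ) v * ζ)) := by
      intro v
      have hconjadd : (starRingEnd ℂ) (v + (starRingEnd ℂ) α) = (starRingEnd ℂ) v + α := by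
        rw [map_add, Complex.conj_conj]
      have hA : ((‖phiNA n α (v + (starRingEnd ℂ) α)‖ : ℂ))^2
          = (((π * n.factorial)⁻¹ : ℝ) : ℂ) * ((‖v‖^(2*n) : ℝ) : ℂ) *
            Complex.exp (((-‖v‖^2 : ℝ) : ℂ)) := by
        calc ((‖phiNA n α (v + (starRingEnd ℂ) α)‖ : ℂ))^2
            = ((‖phiNA n α (v + (starRingEnd ℂ) α)‖^2 : ℝ) : ℂ) := by push_cast; ring
          _ = (((π * n.factorial)⁻¹ * (‖v‖^(2*n) * rexp (-‖v‖^2)) : ℝ) : ℂ) := by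
              rw [norm_phiNA_sq, add_sub_cancel_right]
          _ = _ := by
              rw [Complex.ofReal_mul, Complex.ofReal_mul, Complex.ofReal_exp]
              ring
      have hB : phiNA n α (v + (starRingEnd ℂ) α)
          = ((Real.sqrt (π * n.factorial) : ℝ) : ℂ)⁻¹ * v^n *
            Complex.exp (-(‖v + (starRingEnd ℂ) α‖ : ℂ)^2/2 - ((‖α‖:ℂ))^2/2
              + α * (v + (starRingEnd ℂ) α)) := by
        rw [phiNA, add_sub_cancel_right]
      have hL : F (v + (starRingEnd ℂ) α)
          = ((((π * n.factorial)⁻¹ : ℝ) : ℂ) * ((‖v‖^(2*n) : ℝ) : ℂ) *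
              ((Real.sqrt (π * n.factorial) : ℝ) : ℂ)⁻¹ * v^n) *
            (Complex.exp (((starRingEnd ℂ) v + α) * z - (‖v + (starRingEnd ℂ) α‖ : ℂ)^2/2) *
              Complex.exp (((-‖v‖^2 : ℝ) : ℂ)) *
              Complex.exp (-(‖v + (starRingEnd ℂ) α‖ : ℂ)^2/2 - ((‖α‖:ℂ))^2/2
                + α * (v + (starRingEnd ℂ) α))) := by
        rw [hF]
        simp only
        rw [hA, hB, hconjadd]
        ring
      have hR : K * (((‖v‖^(2*n) * rexp (-2*‖v‖^2) : ℝ) : ℂ) * v^n *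
            Complex.exp ((starRingEnd ℂ) v * ζ))
          = ((((π * n.factorial)⁻¹ : ℝ) : ℂ) * ((‖v‖^(2*n) : ℝ) : ℂ) *
              ((Real.sqrt (π * n.factorial) : ℝ) : ℂ)⁻¹ * v^n) *
            (Complex.exp (α * z - ((‖α‖:ℂ))^2/2) *
              Complex.exp (((-2*‖v‖^2 : ℝ) : ℂ)) *
              Complex.exp ((starRingEnd ℂ) v * ζ)) := by
        rw [hK, Complex.ofReal_mul, Complex.ofReal_exp]
        ring
      rw [hL, hR]
      congr 1
      rw [← Complex.exp_add, ← Complex.exp_add, ← Complex.exp_add, ← Complex.exp_add]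
      congr 1
      rw [hζ]
      push_cast
      rw [hvv', hvv', hvv', hconjadd]
      ring
    rw [show LLLProj (fun w : ℂ => (‖phiNA n α w‖ : ℂ) ^ 2 * phiNA n α w) z
        = (Real.pi : ℂ)⁻¹ * Complex.exp (-(‖z‖ : ℂ) ^ 2 / 2) * ∫ w : ℂ, F w from rfl]
    rw [htrans]
    rw [integral_congr_ae (Filter.Eventually.of_forall hpoint), integral_const_mul,
      key_integral n ζ]
    rw [phiNA, ← hζ]
    rw [show -(‖z‖ : ℂ) ^ 2 / 2 - (‖α‖ : ℂ) ^ 2 / 2 + α * z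
        = (-(‖z‖ : ℂ) ^ 2 / 2) + (α * z - ((‖α‖:ℂ))^2/2) by ring, Complex.exp_add]
    have hπne : ((π : ℝ) : ℂ) ≠ 0 := Complex.ofReal_ne_zero.mpr Real.pi_ne_zero
    have hfne : ((n.factorial : ℝ) : ℂ) ≠ 0 := by
      exact_mod_cast Nat.cast_ne_zero.mpr n.factorial_ne_zero
    have hsne : ((Real.sqrt (π * n.factorial) : ℝ) : ℂ) ≠ 0 :=
      Complex.ofReal_ne_zero.mpr (ne_of_gt (Real.sqrt_pos.mpr hπ))
    have h2ne : ((2:ℂ))^(2*n+1) ≠ 0 := pow_ne_zero _ two_ne_zero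
    rw [hK]
    have hconst : ((Real.pi : ℂ))⁻¹ * (((π * n.factorial)⁻¹ : ℝ) : ℂ) *
        ((n.factorial : ℂ))⁻¹ * ((π * (2*n).factorial / 2^(2*n+1) : ℝ) : ℂ)
        = ((((2 * n).factorial : ℝ) / (Real.pi * (n.factorial : ℝ)^2 * 2^(2*n+1)) : ℝ) : ℂ) := by
      have e1 : (((π * n.factorial)⁻¹ : ℝ) : ℂ) = ((Real.pi : ℂ) * (n.factorial : ℂ))⁻¹ := by
        push_cast; ring
      have e2 : ((π * (2*n).factorial / 2^(2*n+1) : ℝ) : ℂ)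
          = (Real.pi : ℂ) * ((2*n).factorial : ℂ) / 2^(2*n+1) := by push_cast; ring
      have e3 : ((((2 * n).factorial : ℝ) / (Real.pi * (n.factorial : ℝ)^2 * 2^(2*n+1)) : ℝ) : ℂ)
          = ((2*n).factorial : ℂ) / ((Real.pi : ℂ) * ((n.factorial : ℂ))^2 * 2^(2*n+1)) := by
        push_cast; ring
      rw [e1, e2, e3]
      have hcan : (Real.pi : ℂ) * ((Real.pi : ℂ))⁻¹ = 1 := mul_inv_cancel₀ hπne
      linear_combination ((((2*n).factorial : ℂ)) * (((n.factorial : ℂ))⁻¹)^2 *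
        (((2:ℂ)^(2*n+1))⁻¹) * ((Real.pi:ℂ))⁻¹) * hcan
    linear_combination (Complex.exp (-(‖z‖ : ℂ)^2/2) * Complex.exp (α * z - ((‖α‖:ℂ))^2/2) *
      (((Real.sqrt (π * n.factorial) : ℝ) : ℂ))⁻¹ * ζ^n) * hconst
end
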